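/- For fixed reals ℓ < u, the function Ψ(h) = h + (f(u−h) − f(ℓ−h))/(Q(u−h) + Φ(ℓ−h)) is strictly increasing on ℝ, where f, Q, Φ are the standard normal density, tail function, and cdf. -/

import Mathlib

open Real MeasureTheory Set

noncomputable def stdNormalPdf (x : ℝ) : ℝ := (Real.sqrt (2 * Real.pi))⁻¹ * Real.exp (-x ^ 2 / 2)

noncomputable def gaussQ (x : ℝ) : ℝ := ∫ t in Set.Ici x, stdNormalPdf t

noncomputable def gaussPhi (x : ℝ) : ℝ := ∫ t in Set.Iic x, stdNormalPdf t

namespace Stmt11Aux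

open Filter Asymptotics Topology

noncomputable def C : ℝ := (Real.sqrt (2 * Real.pi))⁻¹

lemma C_pos : 0 < C := inv_pos.2 (Real.sqrt_pos.2 (by positivity))

lemma pdf_eq (x : ℝ) : stdNormalPdf x = C * Real.exp (-(1/2) * x ^ 2) := by
  rw [stdNormalPdf, C, show -x ^ 2 / 2 = -(1/2) * x ^ 2 by ring]

lemma pdf_fun_eq : stdNormalPdf = fun x => C * Real.exp (-(1/2) * x ^ 2) := funext pdf_eq

lemma pdf_pos (x : ℝ) : 0 < stdNormalPdf x := by
  rw [pdf_eq]; exact mul_pos C_pos (Real.exp_pos _)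

lemma pdf_cont : Continuous stdNormalPdf := by
  unfold stdNormalPdf; fun_prop

lemma pdf_even (x : ℝ) : stdNormalPdf (-x) = stdNormalPdf x := by
  simp [stdNormalPdf, neg_sq]

lemma int_pdf : Integrable stdNormalPdf := by
  rw [pdf_fun_eq]
  exact (integrable_exp_neg_mul_sq (by norm_num : (0:ℝ) < 1/2)).const_mul C

lemma int_xpdf : Integrable (fun x : ℝ => x * stdNormalPdf x) := by
  have h := (integrable_rpow_mul_exp_neg_mul_sq (b := 1/2) (by norm_num) (s := 1)
    (by norm_num)).const_mul C
  refine h.congr (Eventually.of_forall fun x => ?_)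
  simp only [Real.rpow_one, pdf_eq]
  ring

lemma int_x2pdf : Integrable (fun x : ℝ => x ^ 2 * stdNormalPdf x) := by
  have h := (integrable_rpow_mul_exp_neg_mul_sq (b := 1/2) (by norm_num) (s := 2)
    (by norm_num)).const_mul C
  refine h.congr (Eventually.of_forall fun x => ?_)
  have h2 : ∀ y : ℝ, y ^ (2:ℝ) = y ^ (2:ℕ) := fun y => by
    rw [show ((2:ℝ)) = ((2:ℕ):ℝ) by norm_num, Real.rpow_natCast]
  simp only [h2, pdf_eq]
  ring

lemma int_comb (c d : ℝ) : Integrable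
    (fun x : ℝ => x ^ 2 * stdNormalPdf x - c * (x * stdNormalPdf x) + d * stdNormalPdf x) := by
  have h := (int_x2pdf.sub (int_xpdf.const_mul c)).add (int_pdf.const_mul d)
  refine h.congr (Eventually.of_forall fun x => ?_)
  simp [Pi.sub_apply, Pi.add_apply]

lemma pdf_hasDeriv (x : ℝ) : HasDerivAt stdNormalPdf (-x * stdNormalPdf x) x := by
  have h1 : HasDerivAt (fun y : ℝ => -(1/2) * y ^ 2) (-x) x := by
    have := (hasDerivAt_pow 2 x).const_mul (-(1/2) : ℝ)
    exact this.congr_deriv (by push_cast; ring)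
  have h2 := h1.exp.const_mul C
  have h3 : HasDerivAt (fun y : ℝ => C * Real.exp (-(1/2) * y ^ 2)) (-x * stdNormalPdf x) x := by
    exact h2.congr_deriv (by rw [pdf_eq]; ring)
  exact h3.congr_of_eventuallyEq (Eventually.of_forall pdf_eq)

lemma neg_xpdf_hasDeriv (x : ℝ) :
    HasDerivAt (fun y : ℝ => -(y * stdNormalPdf y))
      (x ^ 2 * stdNormalPdf x - stdNormalPdf x) x := by
  have := ((hasDerivAt_id x).mul (pdf_hasDeriv x)).neg
  exact this.congr_deriv (by simp [id]; ring)

lemma sq_atTop : Tendsto (fun x : ℝ => x ^ 2) atTop atTop := tendsto_pow_atTop two_ne_zero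

lemma sq_atBot : Tendsto (fun x : ℝ => x ^ 2) atBot atTop := by
  have := sq_atTop.comp tendsto_neg_atBot_atTop
  simpa [Function.comp_def, neg_sq] using this

lemma exp_half_sq_tendsto {l : Filter ℝ} (hl : Tendsto (fun x : ℝ => x ^ 2) l atTop) :
    Tendsto (fun x : ℝ => Real.exp (-(1/2) * x ^ 2)) l (𝓝 0) := by
  apply Real.tendsto_exp_atBot.comp
  have h2 : Tendsto (fun x : ℝ => (1/2) * x ^ 2) l atTop := hl.const_mul_atTop (by norm_num)
  have h3 : Tendsto (fun x : ℝ => -((1/2) * x ^ 2)) l atBot := tendsto_neg_atBot_iff.mpr h2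
  exact h3.congr fun x => by ring

lemma pdf_tendsto_atTop : Tendsto stdNormalPdf atTop (𝓝 0) := by
  rw [pdf_fun_eq]
  simpa using (exp_half_sq_tendsto sq_atTop).const_mul C

lemma pdf_tendsto_atBot : Tendsto stdNormalPdf atBot (𝓝 0) := by
  rw [pdf_fun_eq]
  simpa using (exp_half_sq_tendsto sq_atBot).const_mul C

lemma xpdf_tendsto_atTop : Tendsto (fun x : ℝ => x * stdNormalPdf x) atTop (𝓝 0) := by
  have hlo := (rpow_mul_exp_neg_mul_sq_isLittleO_exp_neg (by norm_num : (0:ℝ) < 1/2) 1).isBigO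
  have hexp : Tendsto (fun x : ℝ => Real.exp (-(1/2) * x)) atTop (𝓝 0) := by
    apply Real.tendsto_exp_atBot.comp
    have h2 : Tendsto (fun x : ℝ => (1/2) * x) atTop atTop :=
      tendsto_id.const_mul_atTop (by norm_num)
    have h3 : Tendsto (fun x : ℝ => -((1/2) * x)) atTop atBot := tendsto_neg_atBot_iff.mpr h2
    exact h3.congr fun x => by ring
  have T := (hlo.trans_tendsto hexp).const_mul C
  refine Tendsto.congr (fun x => ?_) (by simpa using T)
  simp only [Real.rpow_one, pdf_eq]
  ring

lemma xpdf_tendsto_atBot : Tendsto (fun x : ℝ => x * stdNormalPdf x) atBot (𝓝 0) := by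
  have T : Tendsto (fun x : ℝ => -(x * stdNormalPdf x)) atTop (𝓝 0) := by
    simpa using xpdf_tendsto_atTop.neg
  have h := T.comp tendsto_neg_atBot_atTop
  refine Tendsto.congr (fun x => ?_) h
  simp [Function.comp_def, pdf_even]

lemma total_eq (x : ℝ) : gaussQ x = (∫ t, stdNormalPdf t) - gaussPhi x := by
  rw [gaussQ, gaussPhi, MeasureTheory.integral_Ici_eq_integral_Ioi]
  have := intervalIntegral.integral_Iic_add_Ioi (μ := volume) (b := x)
    int_pdf.integrableOn int_pdf.integrableOn
  linarith

lemma phi_hasDeriv (x : ℝ) : HasDerivAt gaussPhi (stdNormalPdf x) x := by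
  have he : gaussPhi = fun y => gaussPhi 0 + ∫ t in (0:ℝ)..y, stdNormalPdf t := by
    funext y
    have := intervalIntegral.integral_Iic_sub_Iic (μ := volume) (a := (0:ℝ)) (b := y)
      int_pdf.integrableOn int_pdf.integrableOn
    rw [gaussPhi, gaussPhi]
    linarith
  rw [he]
  exact (intervalIntegral.integral_hasDerivAt_right int_pdf.intervalIntegrable
    (pdf_cont.stronglyMeasurableAtFilter _ _) pdf_cont.continuousAt).const_add _

lemma q_hasDeriv (x : ℝ) : HasDerivAt gaussQ (-stdNormalPdf x) x := by
  have he : gaussQ = fun y => (∫ t, stdNormalPdf t) - gaussPhi y := funext total_eq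
  rw [he]
  simpa using (phi_hasDeriv x).const_sub _

lemma integral_Ioi_pdf (b : ℝ) : ∫ x in Ioi b, stdNormalPdf x = gaussQ b :=
  (MeasureTheory.integral_Ici_eq_integral_Ioi).symm

lemma integral_Ioi_xpdf (b : ℝ) : ∫ x in Ioi b, x * stdNormalPdf x = stdNormalPdf b := by
  have h := integral_Ioi_of_hasDerivAt_of_tendsto' (f := fun y => -stdNormalPdf y)
    (f' := fun y => y * stdNormalPdf y) (a := b) (m := 0)
    (fun x _ => by exact (pdf_hasDeriv x).neg.congr_deriv (by ring))
    int_xpdf.integrableOn (by simpa using pdf_tendsto_atTop.neg)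
  simpa using h

lemma integral_Iic_xpdf (a : ℝ) : ∫ x in Iic a, x * stdNormalPdf x = -stdNormalPdf a := by
  have h := integral_Iic_of_hasDerivAt_of_tendsto' (f := fun y => -stdNormalPdf y)
    (f' := fun y => y * stdNormalPdf y) (a := a) (m := 0)
    (fun x _ => by exact (pdf_hasDeriv x).neg.congr_deriv (by ring))
    int_xpdf.integrableOn (by simpa using pdf_tendsto_atBot.neg)
  simpa using h

lemma integral_Ioi_x2pdf (b : ℝ) :
    ∫ x in Ioi b, x ^ 2 * stdNormalPdf x = gaussQ b + b * stdNormalPdf b := by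
  have h := integral_Ioi_of_hasDerivAt_of_tendsto' (f := fun y => -(y * stdNormalPdf y))
    (f' := fun y => y ^ 2 * stdNormalPdf y - stdNormalPdf y) (a := b) (m := 0)
    (fun x _ => neg_xpdf_hasDeriv x)
    ((int_x2pdf.sub int_pdf).integrableOn.congr_fun
      (fun x _ => by simp [Pi.sub_apply]) measurableSet_Ioi)
    (by simpa using xpdf_tendsto_atTop.neg)
  rw [MeasureTheory.integral_sub int_x2pdf.integrableOn int_pdf.integrableOn,
    integral_Ioi_pdf] at h
  simp only [zero_sub, neg_neg] at h
  linarith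

lemma integral_Iic_x2pdf (a : ℝ) :
    ∫ x in Iic a, x ^ 2 * stdNormalPdf x = gaussPhi a - a * stdNormalPdf a := by
  have h := integral_Iic_of_hasDerivAt_of_tendsto' (f := fun y => -(y * stdNormalPdf y))
    (f' := fun y => y ^ 2 * stdNormalPdf y - stdNormalPdf y) (a := a) (m := 0)
    (fun x _ => neg_xpdf_hasDeriv x)
    ((int_x2pdf.sub int_pdf).integrableOn.congr_fun
      (fun x _ => by simp [Pi.sub_apply]) measurableSet_Iic)
    (by simpa using xpdf_tendsto_atBot.neg)
  rw [MeasureTheory.integral_sub int_x2pdf.integrableOn int_pdf.integrableOn] at h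
  rw [show (∫ x in Iic a, stdNormalPdf x) = gaussPhi a from rfl] at h
  simp only [sub_zero] at h
  linarith

lemma gaussQ_pos (x : ℝ) : 0 < gaussQ x := by
  rw [gaussQ, setIntegral_pos_iff_support_of_nonneg_ae
    (Eventually.of_forall fun y => (pdf_pos y).le) int_pdf.integrableOn]
  have hsub : Set.Ici x ⊆ Function.support stdNormalPdf ∩ Set.Ici x :=
    fun y hy => ⟨(pdf_pos y).ne', hy⟩
  have h2 := measure_mono (μ := volume) hsub
  rw [Real.volume_Ici] at h2
  exact lt_of_lt_of_le (by simp) h2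

lemma gaussPhi_pos (x : ℝ) : 0 < gaussPhi x := by
  rw [gaussPhi, setIntegral_pos_iff_support_of_nonneg_ae
    (Eventually.of_forall fun y => (pdf_pos y).le) int_pdf.integrableOn]
  have hsub : Set.Iic x ⊆ Function.support stdNormalPdf ∩ Set.Iic x :=
    fun y hy => ⟨(pdf_pos y).ne', hy⟩
  have h2 := measure_mono (μ := volume) hsub
  rw [Real.volume_Iic] at h2
  exact lt_of_lt_of_le (by simp) h2

lemma key (a b : ℝ) :
    (stdNormalPdf b - stdNormalPdf a) ^ 2
      < (gaussQ b + gaussPhi a) *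
        ((gaussQ b + b * stdNormalPdf b) + (gaussPhi a - a * stdNormalPdf a)) := by
  have hD : 0 < gaussQ b + gaussPhi a := add_pos (gaussQ_pos b) (gaussPhi_pos a)
  set m : ℝ := (stdNormalPdf b - stdNormalPdf a) / (gaussQ b + gaussPhi a) with hmdef
  have hg : Integrable (fun x : ℝ => (x - m) ^ 2 * stdNormalPdf x) := by
    refine (int_comb (2 * m) (m ^ 2)).congr (Eventually.of_forall fun x => ?_)
    ring
  have expand : ∀ s : Set ℝ, ∫ x in s, (x - m) ^ 2 * stdNormalPdf x =
      (∫ x in s, x ^ 2 * stdNormalPdf x) - 2 * m * (∫ x in s, x * stdNormalPdf x)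
        + m ^ 2 * (∫ x in s, stdNormalPdf x) := by
    intro s
    have h1 : ∀ x : ℝ, (x - m) ^ 2 * stdNormalPdf x
        = x ^ 2 * stdNormalPdf x - (2 * m) * (x * stdNormalPdf x)
          + m ^ 2 * stdNormalPdf x := fun x => by ring
    simp_rw [h1]
    have i2 : Integrable (fun x : ℝ => 2 * m * (x * stdNormalPdf x)) :=
      int_xpdf.const_mul (2 * m)
    have i3 : Integrable (fun x : ℝ => m ^ 2 * stdNormalPdf x) := int_pdf.const_mul (m ^ 2)
    have i1 : Integrable
        (fun x : ℝ => x ^ 2 * stdNormalPdf x - 2 * m * (x * stdNormalPdf x)) := by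
      refine (int_x2pdf.sub i2).congr (Eventually.of_forall fun x => ?_)
      simp [Pi.sub_apply]
    rw [MeasureTheory.integral_add i1.integrableOn i3.integrableOn,
      MeasureTheory.integral_sub int_x2pdf.integrableOn i2.integrableOn,
      MeasureTheory.integral_const_mul, MeasureTheory.integral_const_mul]
  have hV1 : ∫ x in Ioi b, (x - m) ^ 2 * stdNormalPdf x =
      (gaussQ b + b * stdNormalPdf b) - 2 * m * stdNormalPdf b + m ^ 2 * gaussQ b := by
    rw [expand, integral_Ioi_x2pdf, integral_Ioi_xpdf, integral_Ioi_pdf]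
  have hV2 : ∫ x in Iic a, (x - m) ^ 2 * stdNormalPdf x =
      (gaussPhi a - a * stdNormalPdf a) - 2 * m * (-stdNormalPdf a) + m ^ 2 * gaussPhi a := by
    rw [expand, integral_Iic_x2pdf, integral_Iic_xpdf]
    rfl
  have hV1pos : 0 < ∫ x in Ioi b, (x - m) ^ 2 * stdNormalPdf x := by
    rw [setIntegral_pos_iff_support_of_nonneg_ae
      (Eventually.of_forall fun x => mul_nonneg (sq_nonneg _) (pdf_pos x).le) hg.integrableOn]
    have hsub : Ioi (max b m) ⊆
        Function.support (fun x : ℝ => (x - m) ^ 2 * stdNormalPdf x) ∩ Ioi b := by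
      intro x hx
      refine ⟨?_, show b < x from lt_of_le_of_lt (le_max_left _ _) hx⟩
      have hxm : x - m ≠ 0 := sub_ne_zero.mpr (ne_of_gt (lt_of_le_of_lt (le_max_right _ _) hx))
      have hsq : 0 < (x - m) ^ 2 := lt_of_le_of_ne (sq_nonneg _) (Ne.symm (pow_ne_zero 2 hxm))
      exact ne_of_gt (mul_pos hsq (pdf_pos x))
    have h2 := measure_mono (μ := volume) hsub
    rw [Real.volume_Ioi] at h2
    exact lt_of_lt_of_le (by simp) h2
  have hV2nonneg : 0 ≤ ∫ x in Iic a, (x - m) ^ 2 * stdNormalPdf x :=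
    setIntegral_nonneg measurableSet_Iic fun x _ => mul_nonneg (sq_nonneg _) (pdf_pos x).le
  have hVpos : 0 < ((gaussQ b + b * stdNormalPdf b) + (gaussPhi a - a * stdNormalPdf a))
      - 2 * m * (stdNormalPdf b - stdNormalPdf a) + m ^ 2 * (gaussQ b + gaussPhi a) := by
    have := add_pos_of_pos_of_nonneg hV1pos hV2nonneg
    rw [hV1, hV2] at this
    linarith
  have h1 : m * (gaussQ b + gaussPhi a) = stdNormalPdf b - stdNormalPdf a :=
    div_mul_cancel₀ _ hD.ne'
  nlinarith [mul_pos hD hVpos, h1, sq_nonneg (m * (gaussQ b + gaussPhi a))]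

end Stmt11Aux

open Stmt11Aux

theorem stmt11 (ℓ u : ℝ) (hlu : ℓ < u) :
    StrictMono (fun h : ℝ =>
      h + (stdNormalPdf (u - h) - stdNormalPdf (ℓ - h))
            / (gaussQ (u - h) + gaussPhi (ℓ - h))) := by
  apply strictMono_of_deriv_pos
  intro h
  have hD : 0 < gaussQ (u - h) + gaussPhi (ℓ - h) := add_pos (gaussQ_pos _) (gaussPhi_pos _)
  have hsub_u : HasDerivAt (fun y : ℝ => u - y) (-1) h := by
    simpa using (hasDerivAt_id h).const_sub u
  have hsub_l : HasDerivAt (fun y : ℝ => ℓ - y) (-1) h := by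
    simpa using (hasDerivAt_id h).const_sub ℓ
  have h1 : HasDerivAt (fun y : ℝ => stdNormalPdf (u - y))
      ((u - h) * stdNormalPdf (u - h)) h := by
    have := (pdf_hasDeriv (u - h)).comp h hsub_u
    exact this.congr_deriv (by ring)
  have h2 : HasDerivAt (fun y : ℝ => stdNormalPdf (ℓ - y))
      ((ℓ - h) * stdNormalPdf (ℓ - h)) h := by
    have := (pdf_hasDeriv (ℓ - h)).comp h hsub_l
    exact this.congr_deriv (by ring)
  have h3 : HasDerivAt (fun y : ℝ => gaussQ (u - y)) (stdNormalPdf (u - h)) h := by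
    have := (q_hasDeriv (u - h)).comp h hsub_u
    exact this.congr_deriv (by ring)
  have h4 : HasDerivAt (fun y : ℝ => gaussPhi (ℓ - y)) (-stdNormalPdf (ℓ - h)) h := by
    have := (phi_hasDeriv (ℓ - h)).comp h hsub_l
    exact this.congr_deriv (by ring)
  have hN := h1.sub h2
  have hDd := h3.add h4
  have hdiv := hN.div hDd hD.ne'
  have hF : HasDerivAt (fun h : ℝ =>
      h + (stdNormalPdf (u - h) - stdNormalPdf (ℓ - h))
            / (gaussQ (u - h) + gaussPhi (ℓ - h)))
      (1 + (((u - h) * stdNormalPdf (u - h) - (ℓ - h) * stdNormalPdf (ℓ - h))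
              * (gaussQ (u - h) + gaussPhi (ℓ - h))
            - (stdNormalPdf (u - h) - stdNormalPdf (ℓ - h))
              * (stdNormalPdf (u - h) + -stdNormalPdf (ℓ - h)))
          / (gaussQ (u - h) + gaussPhi (ℓ - h)) ^ 2) h := (hasDerivAt_id h).add hdiv
  rw [hF.deriv]
  set fu := stdNormalPdf (u - h)
  set fl := stdNormalPdf (ℓ - h)
  set Qb := gaussQ (u - h)
  set Pa := gaussPhi (ℓ - h)
  have hkey := key (ℓ - h) (u - h)
  have hpos : 0 < ((u - h) * fu - (ℓ - h) * fl) * (Qb + Pa) - (fu - fl) * (fu + -fl)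
      + (Qb + Pa) ^ 2 := by nlinarith [hkey]
  have heq : 1 + (((u - h) * fu - (ℓ - h) * fl) * (Qb + Pa) - (fu - fl) * (fu + -fl))
      / (Qb + Pa) ^ 2
      = (((u - h) * fu - (ℓ - h) * fl) * (Qb + Pa) - (fu - fl) * (fu + -fl) + (Qb + Pa) ^ 2)
        / (Qb + Pa) ^ 2 := by
    field_simp
    ring
  rw [heq]
  exact div_pos hpos (by positivity)
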